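/- Fix λ ∈ {0,1} and define g_λ(k) := ‖k‖^{−1/2} ε(k,λ). For all k, h ∈ ℝ³ with k ≠ 0, k−h ≠ 0, k_⊥ ≠ 0 and (k−h)_⊥ ≠ 0 one has ‖g_λ(k−h) − g_λ(k)‖ ≤ 4‖h‖/(‖k‖^{1/2}‖k_⊥‖) + (‖h‖/2)(‖k‖^{−3/2} + ‖k−h‖^{−3/2}). -/

import Mathlib

noncomputable section

/-- `k_⊥ := (k₂, −k₁, 0)` for `k ∈ ℝ³`. -/
def perp (k : EuclideanSpace ℝ (Fin 3)) : EuclideanSpace ℝ (Fin 3) :=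
  (WithLp.equiv 2 (Fin 3 → ℝ)).symm ![k 1, -(k 0), 0]

/-- The vector cross product on `ℝ³` (as Euclidean space). -/
def cross3 (a b : EuclideanSpace ℝ (Fin 3)) : EuclideanSpace ℝ (Fin 3) :=
  (WithLp.equiv 2 (Fin 3 → ℝ)).symm
    ![a 1 * b 2 - a 2 * b 1, a 2 * b 0 - a 0 * b 2, a 0 * b 1 - a 1 * b 0]

/-- First Coulomb-gauge polarization vector `ε(k,0) := k_⊥ / ‖k_⊥‖`. -/
def eps0 (k : EuclideanSpace ℝ (Fin 3)) : EuclideanSpace ℝ (Fin 3) :=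
  ‖perp k‖⁻¹ • perp k

/-- Second Coulomb-gauge polarization vector `ε(k,1) := (k/‖k‖) × ε(k,0)`. -/
def eps1 (k : EuclideanSpace ℝ (Fin 3)) : EuclideanSpace ℝ (Fin 3) :=
  cross3 (‖k‖⁻¹ • k) (eps0 k)

/-- The polarization vector `ε(k,λ)` for `λ ∈ {0,1}`. -/
def eps (lam : Fin 2) (k : EuclideanSpace ℝ (Fin 3)) : EuclideanSpace ℝ (Fin 3) :=
  if lam = 0 then eps0 k else eps1 k

/-- The photon form factor `g_λ(k) := ‖k‖^{-1/2} ε(k,λ)`. -/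
def gfac (lam : Fin 2) (k : EuclideanSpace ℝ (Fin 3)) : EuclideanSpace ℝ (Fin 3) :=
  (‖k‖ ^ (-(1 : ℝ) / 2)) • eps lam k

lemma norm3 (x : EuclideanSpace ℝ (Fin 3)) : ‖x‖ = Real.sqrt (x 0^2 + x 1^2 + x 2^2) := by
  rw [EuclideanSpace.norm_eq, Fin.sum_univ_three]; simp [sq_abs]

lemma perp_sub (k h : EuclideanSpace ℝ (Fin 3)) : perp (k - h) = perp k - perp h := by
  ext i; fin_cases i <;> simp [perp] <;> ring

lemma norm_perp_le (k : EuclideanSpace ℝ (Fin 3)) : ‖perp k‖ ≤ ‖k‖ := by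
  rw [norm3, norm3]
  apply Real.sqrt_le_sqrt
  show (k 1)^2 + (-(k 0))^2 + (0:ℝ)^2 ≤ _
  nlinarith [sq_nonneg (k 2)]

lemma norm_cross_le (a b : EuclideanSpace ℝ (Fin 3)) : ‖cross3 a b‖ ≤ ‖a‖ * ‖b‖ := by
  rw [norm3, norm3, norm3, ← Real.sqrt_mul (by positivity)]
  apply Real.sqrt_le_sqrt
  show (a 1 * b 2 - a 2 * b 1)^2 + (a 2 * b 0 - a 0 * b 2)^2 + (a 0 * b 1 - a 1 * b 0)^2 ≤ _
  nlinarith [sq_nonneg (a 0 * b 0 + a 1 * b 1 + a 2 * b 2)]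

lemma norm_normalize_sub {E : Type*} [NormedAddCommGroup E] [NormedSpace ℝ E]
    (u v : E) (hu : u ≠ 0) (hv : v ≠ 0) :
    ‖‖u‖⁻¹ • u - ‖v‖⁻¹ • v‖ ≤ 2 * ‖u - v‖ / ‖v‖ := by
  have hu0 : (0:ℝ) < ‖u‖ := norm_pos_iff.2 hu
  have hv0 : (0:ℝ) < ‖v‖ := norm_pos_iff.2 hv
  have key : ‖u‖⁻¹ • u - ‖v‖⁻¹ • v = (‖u‖⁻¹ - ‖v‖⁻¹) • u + ‖v‖⁻¹ • (u - v) := by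
    rw [sub_smul, smul_sub]; abel
  rw [key]
  refine (norm_add_le _ _).trans ?_
  rw [norm_smul, norm_smul, Real.norm_eq_abs, Real.norm_eq_abs, abs_inv, abs_norm]
  have e : |‖u‖⁻¹ - ‖v‖⁻¹| * ‖u‖ = |‖v‖ - ‖u‖| / ‖v‖ := by
    rw [show ‖u‖⁻¹ - ‖v‖⁻¹ = (‖v‖ - ‖u‖) / (‖u‖ * ‖v‖) by
      field_simp]
    rw [abs_div, abs_of_pos (mul_pos hu0 hv0)]
    field_simp
  rw [e]
  have h1 : |‖v‖ - ‖u‖| ≤ ‖u - v‖ := by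
    rw [abs_sub_comm]; exact abs_norm_sub_norm_le u v
  have h2 : |‖v‖ - ‖u‖| / ‖v‖ ≤ ‖u - v‖ / ‖v‖ := by gcongr
  have h3 : ‖v‖⁻¹ * ‖u - v‖ = ‖u - v‖ / ‖v‖ := inv_mul_eq_div _ _
  have h4 : 2 * ‖u - v‖ / ‖v‖ = ‖u - v‖ / ‖v‖ + ‖u - v‖ / ‖v‖ := by ring
  rw [h3, h4]; linarith

lemma rpow_half_sub (a b : ℝ) (ha : 0 < a) (hb : 0 < b) :
    |a ^ (-(1:ℝ)/2) - b ^ (-(1:ℝ)/2)| ≤ |a - b| / 2 * (b ^ (-(3:ℝ)/2) + a ^ (-(3:ℝ)/2)) := by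
  have hs : (0:ℝ) < Real.sqrt a := Real.sqrt_pos.2 ha
  have ht : (0:ℝ) < Real.sqrt b := Real.sqrt_pos.2 hb
  set s := Real.sqrt a
  set t := Real.sqrt b
  have hsa : s ^ 2 = a := Real.sq_sqrt ha.le
  have htb : t ^ 2 = b := Real.sq_sqrt hb.le
  have ea : a ^ (-(1:ℝ)/2) = s⁻¹ := by
    rw [show (-(1:ℝ)/2) = -(1/2) by ring, Real.rpow_neg ha.le, ← Real.sqrt_eq_rpow]
  have eb : b ^ (-(1:ℝ)/2) = t⁻¹ := by
    rw [show (-(1:ℝ)/2) = -(1/2) by ring, Real.rpow_neg hb.le, ← Real.sqrt_eq_rpow]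
  have ea3 : a ^ (-(3:ℝ)/2) = (s ^ 3)⁻¹ := by
    rw [show (-(3:ℝ)/2) = -(1/2 * (3:ℕ)) by push_cast; ring, Real.rpow_neg ha.le,
      Real.rpow_mul ha.le, Real.rpow_natCast, ← Real.sqrt_eq_rpow]
  have eb3 : b ^ (-(3:ℝ)/2) = (t ^ 3)⁻¹ := by
    rw [show (-(3:ℝ)/2) = -(1/2 * (3:ℕ)) by push_cast; ring, Real.rpow_neg hb.le,
      Real.rpow_mul hb.le, Real.rpow_natCast, ← Real.sqrt_eq_rpow]
  rw [ea, eb, ea3, eb3, ← hsa, ← htb]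
  have e1 : s⁻¹ - t⁻¹ = (t - s) * (s⁻¹ * t⁻¹) := by field_simp
  rw [e1, abs_mul, abs_of_pos (mul_pos (inv_pos.2 hs) (inv_pos.2 ht))]
  have e2 : |s^2 - t^2| = |t - s| * (s + t) := by
    rw [show s^2 - t^2 = -((t-s)*(s+t)) by ring, abs_neg, abs_mul, abs_of_pos (add_pos hs ht)]
  rw [e2]
  have key : s⁻¹ * t⁻¹ ≤ (s + t) / 2 * ((t ^ 3)⁻¹ + (s ^ 3)⁻¹) := by
    have h2 : s⁻¹ * t⁻¹ = 1 / (s * t) := by field_simp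
    have h1 : (s + t) / 2 * ((t ^ 3)⁻¹ + (s ^ 3)⁻¹) = (s + t) * (s^3 + t^3) / (2 * (s^3 * t^3)) := by
      field_simp
    rw [h1, h2, div_le_div_iff₀ (by positivity) (by positivity)]
    nlinarith [sq_nonneg (s*t*(s-t)), mul_pos hs ht, mul_pos (mul_pos hs ht) (mul_pos hs ht)]
  calc |t - s| * (s⁻¹ * t⁻¹) ≤ |t - s| * ((s + t) / 2 * ((t ^ 3)⁻¹ + (s ^ 3)⁻¹)) := by
        apply mul_le_mul_of_nonneg_left key (abs_nonneg _)
    _ = |t - s| * (s + t) / 2 * ((t ^ 3)⁻¹ + (s ^ 3)⁻¹) := by ring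

lemma div_denom_mono (c p q : ℝ) (hc : 0 ≤ c) (hp : 0 < p) (hpq : p ≤ q) :
    c / q ≤ c / p := by
  rw [div_eq_mul_inv, div_eq_mul_inv]
  exact mul_le_mul_of_nonneg_left (by
    rw [inv_le_inv₀ (hp.trans_le hpq) hp]; exact hpq) hc

lemma div_num_mono (c d p : ℝ) (hcd : c ≤ d) (hp : 0 < p) : c / p ≤ d / p := by
  rw [div_eq_mul_inv, div_eq_mul_inv]
  exact mul_le_mul_of_nonneg_right hcd (inv_pos.2 hp).le

lemma norm_normalize_le {E : Type*} [NormedAddCommGroup E] [NormedSpace ℝ E] (u : E) :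
    ‖‖u‖⁻¹ • u‖ ≤ 1 := by
  rcases eq_or_ne u 0 with h | h
  · simp [h]
  · rw [norm_smul, norm_inv, norm_norm, inv_mul_cancel₀ (norm_ne_zero_iff.2 h)]

lemma norm_eps0_le (k : EuclideanSpace ℝ (Fin 3)) : ‖eps0 k‖ ≤ 1 := norm_normalize_le _

lemma norm_eps_le (lam : Fin 2) (k : EuclideanSpace ℝ (Fin 3)) : ‖eps lam k‖ ≤ 1 := by
  rw [eps]; split
  · exact norm_eps0_le k
  · refine (norm_cross_le _ _).trans ?_
    calc ‖‖k‖⁻¹ • k‖ * ‖eps0 k‖ ≤ 1 * 1 :=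
      mul_le_mul (norm_normalize_le _) (norm_eps0_le _) (norm_nonneg _) zero_le_one
    _ = 1 := mul_one 1

lemma cross3_split (a a' b b' : EuclideanSpace ℝ (Fin 3)) :
    cross3 a' b' - cross3 a b = cross3 (a' - a) b' + cross3 a (b' - b) := by
  ext i
  have hs : ∀ (x y : EuclideanSpace ℝ (Fin 3)) (j : Fin 3), (x - y) j = x j - y j :=
    fun _ _ _ => rfl
  have ha : ∀ (x y : EuclideanSpace ℝ (Fin 3)) (j : Fin 3), (x + y) j = x j + y j :=
    fun _ _ _ => rfl
  fin_cases i <;> simp only [hs, ha] <;> simp [cross3] <;> ring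

lemma eps_diff (lam : Fin 2) (k h : EuclideanSpace ℝ (Fin 3))
    (hk : k ≠ 0) (hkh : k - h ≠ 0) (hkp : perp k ≠ 0) (hkhp : perp (k - h) ≠ 0) :
    ‖eps lam (k - h) - eps lam k‖ ≤ 4 * ‖h‖ / ‖perp k‖ := by
  have hpk : (0:ℝ) < ‖perp k‖ := norm_pos_iff.2 hkp
  have hk0 : (0:ℝ) < ‖k‖ := norm_pos_iff.2 hk
  have hperpd : ‖perp (k - h) - perp k‖ ≤ ‖h‖ := by
    rw [perp_sub, sub_sub_cancel_left, norm_neg]; exact norm_perp_le h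
  have h0 : ‖eps0 (k - h) - eps0 k‖ ≤ 2 * ‖h‖ / ‖perp k‖ := by
    refine (norm_normalize_sub _ _ hkhp hkp).trans ?_
    exact div_num_mono _ _ _ (by nlinarith [norm_nonneg h]) hpk
  rcases eq_or_ne lam 0 with hl | hl
  · simp only [eps, if_pos hl]
    refine h0.trans ?_
    exact div_num_mono _ _ _ (by nlinarith [norm_nonneg h]) hpk
  · simp only [eps, if_neg hl, eps1, cross3_split]
    refine (norm_add_le _ _).trans ?_
    have t1 : ‖cross3 (‖k - h‖⁻¹ • (k - h) - ‖k‖⁻¹ • k) (eps0 (k - h))‖ ≤ 2 * ‖h‖ / ‖k‖ := by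
      refine (norm_cross_le _ _).trans ?_
      calc ‖‖k - h‖⁻¹ • (k - h) - ‖k‖⁻¹ • k‖ * ‖eps0 (k - h)‖
          ≤ ‖‖k - h‖⁻¹ • (k - h) - ‖k‖⁻¹ • k‖ * 1 :=
            mul_le_mul_of_nonneg_left (norm_eps0_le _) (norm_nonneg _)
        _ = ‖‖k - h‖⁻¹ • (k - h) - ‖k‖⁻¹ • k‖ := mul_one _
        _ ≤ 2 * ‖(k - h) - k‖ / ‖k‖ := norm_normalize_sub _ _ hkh hk
        _ = 2 * ‖h‖ / ‖k‖ := by rw [sub_sub_cancel_left, norm_neg]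
    have t2 : ‖cross3 (‖k‖⁻¹ • k) (eps0 (k - h) - eps0 k)‖ ≤ 2 * ‖h‖ / ‖perp k‖ := by
      refine (norm_cross_le _ _).trans ?_
      calc ‖‖k‖⁻¹ • k‖ * ‖eps0 (k - h) - eps0 k‖ ≤ 1 * (2 * ‖h‖ / ‖perp k‖) :=
            mul_le_mul (norm_normalize_le _) h0 (norm_nonneg _) zero_le_one
        _ = 2 * ‖h‖ / ‖perp k‖ := one_mul _
    have t3 : 2 * ‖h‖ / ‖k‖ ≤ 2 * ‖h‖ / ‖perp k‖ :=
      div_denom_mono _ _ _ (by positivity) hpk (norm_perp_le k)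
    have : 2 * ‖h‖ / ‖perp k‖ + 2 * ‖h‖ / ‖perp k‖ = 4 * ‖h‖ / ‖perp k‖ := by ring
    linarith

/-- **Discrete derivative bound on the photon form factor** (from the proof of
Proposition 5.5, the photon derivative bound):
`‖g_λ(k−h) − g_λ(k)‖ ≤ 4‖h‖/(‖k‖^{1/2}‖k_⊥‖) + (‖h‖/2)(‖k‖^{-3/2} + ‖k−h‖^{-3/2})`. -/
theorem stmt7 (lam : Fin 2) (k h : EuclideanSpace ℝ (Fin 3))
    (hk : k ≠ 0) (hkh : k - h ≠ 0)
    (hkp : perp k ≠ 0) (hkhp : perp (k - h) ≠ 0) :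
    ‖gfac lam (k - h) - gfac lam k‖ ≤
      4 * ‖h‖ / (‖k‖ ^ ((1 : ℝ) / 2) * ‖perp k‖) +
        (‖h‖ / 2) * (‖k‖ ^ (-(3 : ℝ) / 2) + ‖k - h‖ ^ (-(3 : ℝ) / 2)) := by
  have hk0 : (0:ℝ) < ‖k‖ := norm_pos_iff.2 hk
  have hkh0 : (0:ℝ) < ‖k - h‖ := norm_pos_iff.2 hkh
  have hpk : (0:ℝ) < ‖perp k‖ := norm_pos_iff.2 hkp
  set A := ‖k - h‖ ^ (-(1:ℝ)/2) with hA
  set B := ‖k‖ ^ (-(1:ℝ)/2) with hB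
  have hBpos : (0:ℝ) < B := Real.rpow_pos_of_pos hk0 _
  have split : gfac lam (k - h) - gfac lam k
      = (A - B) • eps lam (k - h) + B • (eps lam (k - h) - eps lam k) := by
    rw [gfac, gfac, sub_smul, smul_sub]; abel
  rw [split]
  refine (norm_add_le _ _).trans ?_
  have term1 : ‖(A - B) • eps lam (k - h)‖ ≤
      (‖h‖ / 2) * (‖k‖ ^ (-(3:ℝ)/2) + ‖k - h‖ ^ (-(3:ℝ)/2)) := by
    rw [norm_smul, Real.norm_eq_abs]
    calc |A - B| * ‖eps lam (k - h)‖ ≤ |A - B| * 1 :=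
          mul_le_mul_of_nonneg_left (norm_eps_le _ _) (abs_nonneg _)
      _ = |A - B| := mul_one _
      _ ≤ |‖k - h‖ - ‖k‖| / 2 * (‖k‖ ^ (-(3:ℝ)/2) + ‖k - h‖ ^ (-(3:ℝ)/2)) :=
          rpow_half_sub _ _ hkh0 hk0
      _ ≤ ‖h‖ / 2 * (‖k‖ ^ (-(3:ℝ)/2) + ‖k - h‖ ^ (-(3:ℝ)/2)) := by
          have habs : |‖k - h‖ - ‖k‖| ≤ ‖h‖ := by
            calc |‖k - h‖ - ‖k‖| ≤ ‖(k - h) - k‖ := abs_norm_sub_norm_le _ _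
              _ = ‖h‖ := by rw [sub_sub_cancel_left, norm_neg]
          have hX : (0:ℝ) ≤ ‖k‖ ^ (-(3:ℝ)/2) + ‖k - h‖ ^ (-(3:ℝ)/2) := by positivity
          exact mul_le_mul_of_nonneg_right (by linarith) hX
  have term2 : ‖B • (eps lam (k - h) - eps lam k)‖ ≤
      4 * ‖h‖ / (‖k‖ ^ ((1:ℝ)/2) * ‖perp k‖) := by
    rw [norm_smul, Real.norm_eq_abs, abs_of_pos hBpos]
    have hBe : B = (‖k‖ ^ ((1:ℝ)/2))⁻¹ := by
      rw [hB, show (-(1:ℝ)/2) = -(1/2) by ring, Real.rpow_neg hk0.le]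
    calc B * ‖eps lam (k - h) - eps lam k‖ ≤ B * (4 * ‖h‖ / ‖perp k‖) :=
          mul_le_mul_of_nonneg_left (eps_diff lam k h hk hkh hkp hkhp) hBpos.le
      _ = 4 * ‖h‖ / (‖k‖ ^ ((1:ℝ)/2) * ‖perp k‖) := by
          rw [hBe]
          have : (0:ℝ) < ‖k‖ ^ ((1:ℝ)/2) := Real.rpow_pos_of_pos hk0 _
          field_simp
  linarith
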